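/- Let G be a connected graph of order n with σ*(G) ≥ n. Then for every vertex u of G, u has a neighbor that is not a cut-vertex of G. -/

import Mathlib

/-- `I` is an independent set of `G`. -/
def IsIndep {V : Type*} (G : SimpleGraph V) (I : Finset V) : Prop :=
  ∀ u ∈ I, ∀ v ∈ I, u ≠ v → ¬ G.Adj u v

/-- `I` is a large independent set: `|I| ≥ δ_G(I) + 1`. -/
def IsLarge {V : Type*} [Fintype V] (G : SimpleGraph V) [DecidableRel G.Adj]
    (I : Finset V) : Prop :=
  ∃ u ∈ I, G.degree u + 1 ≤ I.card

/-- `v` is a cut-vertex of the connected graph `G`: removing `v` disconnects `G`. -/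
def IsCutVertex {V : Type*} (G : SimpleGraph V) (v : V) : Prop :=
  ¬ (G.induce {u : V | u ≠ v}).Connected

/-- `x` lies in a component of `G - c` that does not contain `u`. -/
def InD {V : Type*} (G : SimpleGraph V) (u c x : V) : Prop :=
  ∃ (hx : x ≠ c) (hu : u ≠ c),
    ¬ (G.induce {y : V | y ≠ c}).Reachable ⟨x, hx⟩ ⟨u, hu⟩

lemma not_inD_self {V : Type*} {G : SimpleGraph V} {u c : V} : ¬ InD G u c u := by
  rintro ⟨h1, h2, hr⟩
  exact hr (SimpleGraph.Reachable.refl _)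

lemma inD_of_adj {V : Type*} {G : SimpleGraph V} {u c x y : V}
    (hx : InD G u c x) (hxy : G.Adj x y) (hyc : y ≠ c) : InD G u c y := by
  obtain ⟨hxc, huc, hr⟩ := hx
  refine ⟨hyc, huc, fun h => hr ?_⟩
  have hadj : (G.induce {y : V | y ≠ c}).Adj ⟨x, hxc⟩ ⟨y, hyc⟩ := by
    simp [hxy]
  exact hadj.reachable.trans h

lemma not_inD_nbr {V : Type*} {G : SimpleGraph V} {u c c' : V}
    (h : G.Adj u c') : ¬ InD G u c c' := by
  rintro ⟨h1, h2, hr⟩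
  have hadj : (G.induce {y : V | y ≠ c}).Adj ⟨c', h1⟩ ⟨u, h2⟩ := by
    simp [h.symm]
  exact hr hadj.reachable

lemma not_inD_of_inD {V : Type*} {G : SimpleGraph V} {c c' : V} :
    ∀ {x u : V}, G.Walk x u → G.Adj u c → G.Adj u c' → c ≠ c' →
      InD G u c x → ¬ InD G u c' x := by
  intro x u w
  induction w with
  | nil => exact fun _ _ _ h _ => not_inD_self h
  | @cons a b u hadj p ih =>
      intro hc hc' hcc hx hx'
      obtain ⟨hac', huc', hr⟩ := hx'
      by_cases hbc : b = c
      · subst hbc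
        have h1 : (G.induce {y : V | y ≠ c'}).Adj ⟨a, hac'⟩ ⟨b, hcc⟩ := by simp [hadj]
        have h2 : (G.induce {y : V | y ≠ c'}).Adj ⟨b, hcc⟩ ⟨u, hc'.ne⟩ := by simp [hc.symm]
        exact hr (h1.reachable.trans h2.reachable)
      · have hb : InD G u c b := inD_of_adj hx hadj hbc
        have hnb : ¬ InD G u c' b := ih hc hc' hcc hb
        have hbc' : b ≠ c' := by
          rintro rfl
          exact not_inD_nbr hc' hb
        have hreach : (G.induce {y : V | y ≠ c'}).Reachable ⟨b, hbc'⟩ ⟨u, hc'.ne⟩ := by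
          by_contra hR
          exact hnb ⟨hbc', hc'.ne, hR⟩
        have h1 : (G.induce {y : V | y ≠ c'}).Adj ⟨a, hac'⟩ ⟨b, hbc'⟩ := by simp [hadj]
        exact hr (h1.reachable.trans hreach)

/-- Let `G` be a connected graph of order `n` with `σ*(G) ≥ n`.
Then every vertex `u` of `G` has a neighbour that is not a cut-vertex of `G`.
(As in the source, one may additionally assume `δ(G) ≥ 2` and that `G` has a
cut-vertex.) -/
theorem stmt9 {V : Type*} [Fintype V] (G : SimpleGraph V) [DecidableRel G.Adj]
    (hconn : G.Connected)
    (hσ : ∀ I : Finset V, IsIndep G I → IsLarge G I →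
      Fintype.card V ≤ ∑ u ∈ I, G.degree u)
    (hδ : ∀ v : V, 2 ≤ G.degree v)
    (hcut : ∃ v : V, IsCutVertex G v) :
    ∀ u : V, ∃ w : V, G.Adj u w ∧ ¬ IsCutVertex G w := by
  classical
  intro u
  by_contra hcon
  push_neg at hcon
  -- For each neighbour c of u, there is a vertex separated from u by c
  have hne : ∀ c, G.Adj u c → ∃ x, InD G u c x := by
    intro c hadj
    have hcut := hcon c hadj
    unfold IsCutVertex at hcut
    rw [SimpleGraph.connected_iff] at hcut
    push_neg at hcut
    have hnonempty : Nonempty {y : V | y ≠ c} := ⟨⟨u, hadj.ne⟩⟩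
    have hpre : ¬ (G.induce {y : V | y ≠ c}).Preconnected :=
      fun hp => (hcut hp).false hnonempty.some
    unfold SimpleGraph.Preconnected at hpre
    push_neg at hpre
    obtain ⟨a, b, hab⟩ := hpre
    by_cases ha : (G.induce {y : V | y ≠ c}).Reachable a ⟨u, hadj.ne⟩
    · refine ⟨b, b.2, hadj.ne, fun hb => ?_⟩
      exact hab (ha.trans hb.symm)
    · exact ⟨a, a.2, hadj.ne, ha⟩
  have htot : ∀ c, ∃ x, (G.Adj u c → InD G u c x) := by
    intro c
    by_cases h : G.Adj u c
    · exact (hne c h).imp fun x hx _ => hx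
    · exact ⟨u, fun h' => absurd h' h⟩
  choose ysel hysel using htot
  -- disjointness of the separated pieces
  have hdisj : ∀ c₁ c₂ x, G.Adj u c₁ → G.Adj u c₂ → InD G u c₁ x → InD G u c₂ x → c₁ = c₂ := by
    intro c₁ c₂ x h1 h2 hx1 hx2
    by_contra hne12
    exact not_inD_of_inD ((hconn.preconnected x u).some) h1 h2 hne12 hx1 hx2
  set N := G.neighborFinset u with hN
  set I : Finset V := insert u (N.image ysel) with hI
  have hmemN : ∀ c, c ∈ N ↔ G.Adj u c := by
    intro c; simp [hN]
  have hyu : ∀ c ∈ N, ysel c ≠ u := by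
    intro c hc h
    exact not_inD_self (h ▸ hysel c ((hmemN c).1 hc))
  have huI : u ∉ N.image ysel := by
    simp only [Finset.mem_image]
    rintro ⟨c, hc, hcy⟩
    exact hyu c hc hcy
  have hinj : ∀ c₁ ∈ N, ∀ c₂ ∈ N, ysel c₁ = ysel c₂ → c₁ = c₂ := by
    intro c₁ hc1 c₂ hc2 h
    exact hdisj c₁ c₂ (ysel c₁) ((hmemN _).1 hc1) ((hmemN _).1 hc2)
      (hysel c₁ ((hmemN _).1 hc1)) (h ▸ hysel c₂ ((hmemN _).1 hc2))
  have hnadj_u : ∀ c ∈ N, ¬ G.Adj u (ysel c) := by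
    intro c hc hadj
    exact not_inD_nbr hadj (hysel c ((hmemN _).1 hc))
  have hnadj : ∀ c₁ ∈ N, ∀ c₂ ∈ N, c₁ ≠ c₂ → ¬ G.Adj (ysel c₁) (ysel c₂) := by
    intro c₁ hc1 c₂ hc2 h12 hadj
    have h1 := hysel c₁ ((hmemN _).1 hc1)
    have h2 := hysel c₂ ((hmemN _).1 hc2)
    by_cases hyc : ysel c₂ = c₁
    · exact not_inD_nbr (hyc ▸ (hmemN _).1 hc1) h2
    · have : InD G u c₁ (ysel c₂) := inD_of_adj h1 hadj hyc
      exact h12 (hdisj c₁ c₂ (ysel c₂) ((hmemN _).1 hc1) ((hmemN _).1 hc2) this h2)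
  have hindep : IsIndep G I := by
    intro a ha b hb hab
    simp only [hI, Finset.mem_insert, Finset.mem_image] at ha hb
    rcases ha with rfl | ⟨c₁, hc1, rfl⟩
    · rcases hb with rfl | ⟨c₂, hc2, rfl⟩
      · exact absurd rfl hab
      · exact hnadj_u c₂ hc2
    · rcases hb with rfl | ⟨c₂, hc2, rfl⟩
      · exact fun h => hnadj_u c₁ hc1 h.symm
      · refine hnadj c₁ hc1 c₂ hc2 (fun h => hab ?_)
        subst h; rfl
  have hcardim : (N.image ysel).card = G.degree u := by
    rw [Finset.card_image_of_injOn fun c₁ hc1 c₂ hc2 h => hinj c₁ hc1 c₂ hc2 h]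
    simp [hN]
  have hcardI : I.card = G.degree u + 1 := by
    rw [hI, Finset.card_insert_of_notMem huI, hcardim]
  have hlarge : IsLarge G I := ⟨u, by simp [hI], by omega⟩
  set D : V → Finset V := fun c => Finset.univ.filter (InD G u c) with hD
  have hdeg : ∀ c ∈ N, G.degree (ysel c) ≤ (D c).card := by
    intro c hc
    have hcadj := (hmemN _).1 hc
    have hy := hysel c hcadj
    have hsub : G.neighborFinset (ysel c) ⊆ insert c ((D c).erase (ysel c)) := by
      intro z hz
      rw [SimpleGraph.mem_neighborFinset] at hz
      by_cases hzc : z = c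
      · simp [hzc]
      · refine Finset.mem_insert_of_mem (Finset.mem_erase.2 ⟨fun h => ?_, ?_⟩)
        · exact G.loopless.irrefl z (h ▸ hz)
        · simp only [hD, Finset.mem_filter, Finset.mem_univ, true_and]
          exact inD_of_adj hy hz hzc
    have hmem : ysel c ∈ D c := by
      simp only [hD, Finset.mem_filter, Finset.mem_univ, true_and]; exact hy
    calc G.degree (ysel c) = (G.neighborFinset (ysel c)).card :=
          (G.card_neighborFinset_eq_degree _).symm
      _ ≤ (insert c ((D c).erase (ysel c))).card := Finset.card_le_card hsub
      _ ≤ ((D c).erase (ysel c)).card + 1 := Finset.card_insert_le _ _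
      _ = (D c).card := by
          rw [Finset.card_erase_of_mem hmem]
          have : 1 ≤ (D c).card := Finset.card_pos.2 ⟨ysel c, hmem⟩
          omega
  have hDdisj : ∀ c₁ ∈ N, ∀ c₂ ∈ N, c₁ ≠ c₂ → Disjoint (D c₁) (D c₂) := by
    intro c₁ hc1 c₂ hc2 h12
    rw [Finset.disjoint_left]
    intro x hx1 hx2
    simp only [hD, Finset.mem_filter, Finset.mem_univ, true_and] at hx1 hx2
    exact h12 (hdisj c₁ c₂ x ((hmemN _).1 hc1) ((hmemN _).1 hc2) hx1 hx2)
  have hDsub : N.biUnion D ⊆ Finset.univ \ insert u N := by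
    intro x hx
    rw [Finset.mem_biUnion] at hx
    obtain ⟨c, hc, hxc⟩ := hx
    simp only [hD, Finset.mem_filter, Finset.mem_univ, true_and] at hxc
    rw [Finset.mem_sdiff, Finset.mem_insert]
    refine ⟨Finset.mem_univ _, ?_⟩
    rintro (rfl | hxN)
    · exact not_inD_self hxc
    · exact not_inD_nbr ((hmemN _).1 hxN) hxc
  have hsumD : ∑ c ∈ N, (D c).card ≤ Fintype.card V - (G.degree u + 1) := by
    have h1 : (N.biUnion D).card = ∑ c ∈ N, (D c).card :=
      Finset.card_biUnion hDdisj
    have h2 : (N.biUnion D).card ≤ (Finset.univ \ insert u N).card :=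
      Finset.card_le_card hDsub
    have h3 : (Finset.univ \ insert u N).card = Fintype.card V - (G.degree u + 1) := by
      rw [Finset.card_sdiff_of_subset (Finset.subset_univ _),
        Finset.card_insert_of_notMem (by simp [hN]), Finset.card_univ]
      simp [hN]
    omega
  have hdegN : G.degree u + 1 ≤ Fintype.card V := by
    have h4 : (insert u N).card ≤ Finset.univ.card :=
      Finset.card_le_card (Finset.subset_univ _)
    rw [Finset.card_insert_of_notMem (by simp [hN]), Finset.card_univ] at h4
    simpa [hN] using h4
  have hsum : ∑ v ∈ I, G.degree v ≤ Fintype.card V - 1 := by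
    have h1 : ∑ v ∈ I, G.degree v = G.degree u + ∑ c ∈ N, G.degree (ysel c) := by
      rw [hI, Finset.sum_insert huI, Finset.sum_image hinj]
    have h2 : ∑ c ∈ N, G.degree (ysel c) ≤ ∑ c ∈ N, (D c).card :=
      Finset.sum_le_sum hdeg
    omega
  have := hσ I hindep hlarge
  omega
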